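/- Let g : (0,∞) → ℝ be differentiable with g > 0 and g' < 0, let N ≥ 2, masses m_i > 0 for i ∈ {1,...,N}, an extra mass m > 0 (the central mass), A > 0, r > 0 with A²r - m·g(r) equal to ∑_{j≠i} m_j sin(|α_i-α_j|/2) g(2r sin(|α_i-α_j|/2)) > 0 for each i. Then for all ρ ∈ ℝ, γ ∈ ℝ^N, the quadratic form -2ρ² (A² - m·g'(r)) ∑_i m_i + ∑_{i≠j} m_i m_j (2ρ sin((α_i-α_j)/2) + r(γ_i-γ_j) cos((α_i-α_j)/2))² g'(2r sin(|α_i-α_j|/2)) - ∑_{i≠j} m_i m_j (γ_i-γ_j)² r sin(|α_i-α_j|/2) g(2r sin(|α_i-α_j|/2)) is ≤ 0, with equality iff ρ = 0 and all γ_i equal. -/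

import Mathlib

open Finset in
theorem hessian_quadratic_form_central_mass (N : ℕ) (hN : 2 ≤ N)
    (m : Fin N → ℝ) (hm : ∀ i, 0 < m i) (mc : ℝ) (hmc : 0 < mc)
    (r A : ℝ) (hr : 0 < r) (hA : 0 < A)
    (g g' : ℝ → ℝ) (hderiv : ∀ x : ℝ, 0 < x → HasDerivAt g (g' x) x)
    (hgpos : ∀ x : ℝ, 0 < x → 0 < g x) (hg'neg : ∀ x : ℝ, 0 < x → g' x < 0)
    (α : Fin N → ℝ) (hα0 : ∀ i, 0 ≤ α i) (hα2π : ∀ i, α i < 2 * Real.pi)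
    (hmono : StrictMono α)
    (hbal : ∀ i, A ^ 2 * r - mc * g r =
      ∑ j ∈ univ.erase i, m j * Real.sin (|α i - α j| / 2) *
        g (2 * r * Real.sin (|α i - α j| / 2)))
    (hpos : 0 < A ^ 2 * r - mc * g r) :
    ∀ (ρ : ℝ) (γ : Fin N → ℝ),
      (-2 * ρ ^ 2 * (A ^ 2 - mc * g' r) * ∑ i, m i
        + ∑ i, ∑ j ∈ univ.erase i, m i * m j *
            (2 * ρ * Real.sin ((α i - α j) / 2)
              + r * (γ i - γ j) * Real.cos ((α i - α j) / 2)) ^ 2 *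
            g' (2 * r * Real.sin (|α i - α j| / 2))
        - ∑ i, ∑ j ∈ univ.erase i, m i * m j * (γ i - γ j) ^ 2 * r *
            Real.sin (|α i - α j| / 2) * g (2 * r * Real.sin (|α i - α j| / 2)) ≤ 0)
      ∧ ((-2 * ρ ^ 2 * (A ^ 2 - mc * g' r) * ∑ i, m i
        + ∑ i, ∑ j ∈ univ.erase i, m i * m j *
            (2 * ρ * Real.sin ((α i - α j) / 2)
              + r * (γ i - γ j) * Real.cos ((α i - α j) / 2)) ^ 2 *
            g' (2 * r * Real.sin (|α i - α j| / 2))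
        - ∑ i, ∑ j ∈ univ.erase i, m i * m j * (γ i - γ j) ^ 2 * r *
            Real.sin (|α i - α j| / 2) * g (2 * r * Real.sin (|α i - α j| / 2)) = 0)
        ↔ ρ = 0 ∧ ∀ i j, γ i = γ j) := by
  have hπ := Real.pi_pos
  have hsin : ∀ i j : Fin N, i ≠ j → 0 < Real.sin (|α i - α j| / 2) := by
    intro i j hij
    have hne : α i ≠ α j := fun h => hij (hmono.injective h)
    have h0 : 0 < |α i - α j| := abs_pos.mpr (sub_ne_zero.mpr hne)
    have h2 : |α i - α j| < 2 * Real.pi := by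
      rw [abs_sub_lt_iff]
      constructor <;> nlinarith [hα0 i, hα0 j, hα2π i, hα2π j]
    exact Real.sin_pos_of_pos_of_lt_pi (by linarith) (by linarith)
  have hApos : 0 < A ^ 2 - mc * g' r := by
    have := hg'neg r hr
    nlinarith
  have hmsum : 0 < ∑ i, m i :=
    Finset.sum_pos (fun i _ => hm i) ⟨⟨0, by omega⟩, Finset.mem_univ _⟩
  intro ρ γ
  have hT1le : -2 * ρ ^ 2 * (A ^ 2 - mc * g' r) * ∑ i, m i ≤ 0 := by
    nlinarith [sq_nonneg ρ, mul_pos hApos hmsum]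
  have hT2le : (∑ i, ∑ j ∈ univ.erase i, m i * m j *
      (2 * ρ * Real.sin ((α i - α j) / 2)
        + r * (γ i - γ j) * Real.cos ((α i - α j) / 2)) ^ 2 *
      g' (2 * r * Real.sin (|α i - α j| / 2))) ≤ 0 := by
    apply Finset.sum_nonpos
    intro i _
    apply Finset.sum_nonpos
    intro j hj
    have hij : i ≠ j := (Finset.ne_of_mem_erase hj).symm
    have hg' : g' (2 * r * Real.sin (|α i - α j| / 2)) < 0 :=
      hg'neg _ (by have hs := hsin i j hij; positivity)
    exact mul_nonpos_of_nonneg_of_nonpos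
      (mul_nonneg (mul_pos (hm i) (hm j)).le (sq_nonneg _)) hg'.le
  have hT3ge : 0 ≤ ∑ i, ∑ j ∈ univ.erase i, m i * m j * (γ i - γ j) ^ 2 * r *
      Real.sin (|α i - α j| / 2) * g (2 * r * Real.sin (|α i - α j| / 2)) := by
    apply Finset.sum_nonneg
    intro i _
    apply Finset.sum_nonneg
    intro j hj
    have hij : i ≠ j := (Finset.ne_of_mem_erase hj).symm
    have hs := hsin i j hij
    have hg := hgpos (2 * r * Real.sin (|α i - α j| / 2)) (by positivity)
    have := (hm i).le
    have := (hm j).le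
    positivity
  refine ⟨by linarith, ?_, ?_⟩
  · intro heq
    have e1 : -2 * ρ ^ 2 * (A ^ 2 - mc * g' r) * ∑ i, m i = 0 := by linarith
    have e3 : (∑ i, ∑ j ∈ univ.erase i, m i * m j * (γ i - γ j) ^ 2 * r *
        Real.sin (|α i - α j| / 2) * g (2 * r * Real.sin (|α i - α j| / 2))) = 0 := by
      linarith
    have hρ : ρ = 0 := by
      by_contra h
      have h2 : 0 < ρ ^ 2 := by positivity
      nlinarith [mul_pos hApos hmsum]
    refine ⟨hρ, ?_⟩
    intro i j
    rcases eq_or_ne i j with rfl | hij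
    · rfl
    have hnn : ∀ i ∈ (univ : Finset (Fin N)), 0 ≤ ∑ j ∈ univ.erase i,
        m i * m j * (γ i - γ j) ^ 2 * r *
        Real.sin (|α i - α j| / 2) * g (2 * r * Real.sin (|α i - α j| / 2)) := by
      intro i _
      apply Finset.sum_nonneg
      intro j hj
      have hij' : i ≠ j := (Finset.ne_of_mem_erase hj).symm
      have hs := hsin i j hij'
      have hg := hgpos (2 * r * Real.sin (|α i - α j| / 2)) (by positivity)
      have := (hm i).le
      have := (hm j).le
      positivity
    have hinner := (Finset.sum_eq_zero_iff_of_nonneg hnn).mp e3 i (Finset.mem_univ i)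
    have hnn2 : ∀ j' ∈ univ.erase i, 0 ≤ m i * m j' * (γ i - γ j') ^ 2 * r *
        Real.sin (|α i - α j'| / 2) * g (2 * r * Real.sin (|α i - α j'| / 2)) := by
      intro j' hj
      have hij' : i ≠ j' := (Finset.ne_of_mem_erase hj).symm
      have hs := hsin i j' hij'
      have hg := hgpos (2 * r * Real.sin (|α i - α j'| / 2)) (by positivity)
      have := (hm i).le
      have := (hm j').le
      positivity
    have hterm := (Finset.sum_eq_zero_iff_of_nonneg hnn2).mp hinner j
      (Finset.mem_erase.mpr ⟨hij.symm, Finset.mem_univ j⟩)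
    have hs := hsin i j hij
    have hg := hgpos (2 * r * Real.sin (|α i - α j| / 2)) (by positivity)
    have hmi := hm i
    have hmj := hm j
    have hfac : (0:ℝ) < m i * m j * r * Real.sin (|α i - α j| / 2) *
        g (2 * r * Real.sin (|α i - α j| / 2)) := by positivity
    have hterm' : (m i * m j * r * Real.sin (|α i - α j| / 2) *
        g (2 * r * Real.sin (|α i - α j| / 2))) * (γ i - γ j) ^ 2 = 0 := by
      linear_combination hterm
    rcases mul_eq_zero.mp hterm' with h | h
    · exact absurd h hfac.ne'
    · have := sq_eq_zero_iff.mp h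
      linarith
  · rintro ⟨rfl, hγ⟩
    have e1 : -2 * (0:ℝ) ^ 2 * (A ^ 2 - mc * g' r) * ∑ i, m i = 0 := by ring
    have e2 : (∑ i, ∑ j ∈ univ.erase i, m i * m j *
        (2 * (0:ℝ) * Real.sin ((α i - α j) / 2)
          + r * (γ i - γ j) * Real.cos ((α i - α j) / 2)) ^ 2 *
        g' (2 * r * Real.sin (|α i - α j| / 2))) = 0 := by
      apply Finset.sum_eq_zero
      intro i _
      apply Finset.sum_eq_zero
      intro j _
      rw [hγ i j]
      ring
    have e3 : (∑ i, ∑ j ∈ univ.erase i, m i * m j * (γ i - γ j) ^ 2 * r *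
        Real.sin (|α i - α j| / 2) * g (2 * r * Real.sin (|α i - α j| / 2))) = 0 := by
      apply Finset.sum_eq_zero
      intro i _
      apply Finset.sum_eq_zero
      intro j _
      rw [hγ i j]
      ring
    linarith
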